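/- For a symmetric α-stable law F_α with 1 < α ≤ 2, scale σ > 0 and shift m > 0, having Fourier transform f̂_α(ξ) = exp(-imξ - |σξ|^α), one has T(F_α) = (σα/(2m)) ((α-1)/α)^{(α-1)/α} e^{-(α-1)/α}. -/

import Mathlib

open MeasureTheory Complex

/-- Fourier transform `f̂(ξ) = ∫ e^{-iξx} dF(x)` of a measure on `ℝ`. -/
noncomputable def ft (μ : Measure ℝ) (ξ : ℝ) : ℂ :=
  ∫ x, Complex.exp (-(Complex.I * ξ * x)) ∂μ

/-- Derivative of the Fourier transform: `f̂'(ξ) = -i ∫ x e^{-iξx} dF(x)`. -/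
noncomputable def ft' (μ : Measure ℝ) (ξ : ℝ) : ℂ :=
  ∫ x, -(Complex.I * x) * Complex.exp (-(Complex.I * ξ * x)) ∂μ

/-- The Fourier-based inequality index `T(F) = (1/2) sup_ξ |f̂(ξ) - f̂'(ξ)/f̂'(0)|`. -/
noncomputable def Tindex (μ : Measure ℝ) : ℝ :=
  (1 / 2) * ⨆ ξ : ℝ, ‖ft μ ξ - ft' μ ξ / ft' μ 0‖

lemma key_sup {β u : ℝ} (hβ : 0 < β) (hu : 0 ≤ u) :
    u ^ β * Real.exp (-u) ≤ β ^ β * Real.exp (-β) := by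
  rcases eq_or_lt_of_le hu with h | h
  · rw [← h, Real.zero_rpow hβ.ne', zero_mul]
    positivity
  · have h1 : u / β ≤ Real.exp (u / β - 1) := by
      have := Real.add_one_le_exp (u / β - 1)
      linarith
    have h2 : (u / β) ^ β ≤ Real.exp (u / β - 1) ^ β :=
      Real.rpow_le_rpow (by positivity) h1 hβ.le
    rw [← Real.exp_mul, sub_mul, div_mul_cancel₀ _ hβ.ne', one_mul] at h2
    rw [Real.div_rpow h.le hβ.le, div_le_iff₀ (by positivity)] at h2
    calc u ^ β * Real.exp (-u) ≤ Real.exp (u - β) * β ^ β * Real.exp (-u) := by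
          apply mul_le_mul_of_nonneg_right h2 (Real.exp_pos _).le
      _ = β ^ β * Real.exp (-β) := by
          rw [mul_comm (Real.exp (u - β)), mul_assoc, ← Real.exp_add]
          ring_nf

lemma norm_exp_aux (ξ x : ℝ) : ‖Complex.exp (-(Complex.I * ξ * x))‖ = 1 := by
  rw [show -(Complex.I * (ξ:ℂ) * (x:ℂ)) = ((-(ξ * x) : ℝ) : ℂ) * Complex.I by push_cast; ring]
  rw [Complex.norm_exp_ofReal_mul_I]

lemma hasDerivAt_ft (μ : Measure ℝ) [IsProbabilityMeasure μ]
    (hint : Integrable (fun x : ℝ => x) μ) (ξ₀ : ℝ) :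
    HasDerivAt (ft μ) (ft' μ ξ₀) ξ₀ := by
  have key := hasDerivAt_integral_of_dominated_loc_of_deriv_le
    (F := fun (ξ : ℝ) (x : ℝ) => Complex.exp (-(Complex.I * ξ * x)))
    (F' := fun (ξ : ℝ) (x : ℝ) => -(Complex.I * x) * Complex.exp (-(Complex.I * ξ * x)))
    (x₀ := ξ₀) (bound := fun x => |x|) (μ := μ) (s := Metric.ball ξ₀ 1) (Metric.ball_mem_nhds ξ₀ one_pos)
    ?_ ?_ ?_ ?_ ?_ ?_
  · exact key.2
  · filter_upwards with ξ
    exact (Continuous.aestronglyMeasurable (by continuity))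
  · apply Integrable.mono' (integrable_const (1:ℝ))
    · exact Continuous.aestronglyMeasurable (by continuity)
    · filter_upwards with x
      rw [norm_exp_aux]
  · exact Continuous.aestronglyMeasurable (by continuity)
  · filter_upwards with x ξ _
    rw [norm_mul, norm_exp_aux, mul_one, norm_neg, norm_mul]
    simp
  · exact hint.norm
  · filter_upwards with x ξ _
    have h1 : HasDerivAt (fun ξ : ℝ => -(Complex.I * (ξ:ℂ) * (x:ℂ))) (-(Complex.I * x)) ξ := by
      have := ((Complex.ofRealCLM.hasDerivAt (x := ξ)).const_mul Complex.I).mul_const (x:ℂ)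
      simpa using this.fun_neg
    have := h1.cexp
    simpa [mul_comm] using this

lemma hasDerivAt_G {α σ m : ℝ} (hα : 1 < α) (ξ : ℝ) :
    HasDerivAt (fun ξ : ℝ => Complex.exp (-(Complex.I * m * ξ) - ((|σ * ξ| ^ α : ℝ) : ℂ)))
      (Complex.exp (-(Complex.I * m * ξ) - ((|σ * ξ| ^ α : ℝ) : ℂ)) *
        (-(Complex.I * m) - ((α * |σ * ξ| ^ (α - 2) * (σ * ξ) * σ : ℝ) : ℂ))) ξ := by
  have h1 : HasDerivAt (fun ξ : ℝ => -(Complex.I * (m:ℂ) * (ξ:ℂ))) (-(Complex.I * m)) ξ := by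
    have := ((Complex.ofRealCLM.hasDerivAt (x := ξ)).const_mul (Complex.I * m))
    simpa [mul_assoc] using this.fun_neg
  have h2 : HasDerivAt (fun ξ : ℝ => |σ * ξ| ^ α) (α * |σ * ξ| ^ (α - 2) * (σ * ξ) * σ) ξ := by
    have := (hasDerivAt_abs_rpow (σ * ξ) hα).comp ξ ((hasDerivAt_id ξ).const_mul σ)
    simpa [Function.comp_def, mul_comm σ] using this
  exact (h1.sub h2.ofReal_comp).cexp

lemma ft'_eq {α σ m : ℝ} (hα : 1 < α) (μ : Measure ℝ) [IsProbabilityMeasure μ]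
    (hint : Integrable (fun x : ℝ => x) μ)
    (hft : ∀ ξ : ℝ, ft μ ξ = Complex.exp (-(Complex.I * m * ξ) - ((|σ * ξ| ^ α : ℝ) : ℂ)))
    (ξ : ℝ) :
    ft' μ ξ = Complex.exp (-(Complex.I * m * ξ) - ((|σ * ξ| ^ α : ℝ) : ℂ)) *
        (-(Complex.I * m) - ((α * |σ * ξ| ^ (α - 2) * (σ * ξ) * σ : ℝ) : ℂ)) := by
  have h1 := hasDerivAt_ft μ hint ξ
  rw [show ft μ = fun ξ : ℝ => Complex.exp (-(Complex.I * m * ξ) - ((|σ * ξ| ^ α : ℝ) : ℂ))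
      from funext hft] at h1
  exact h1.unique (hasDerivAt_G hα ξ)

lemma rpow_sub_two_mul {α t : ℝ} (hα : 1 < α) (ht : 0 ≤ t) :
    t ^ (α - 2) * t = t ^ (α - 1) := by
  rcases eq_or_lt_of_le ht with h | h
  · rw [← h, mul_zero, Real.zero_rpow (sub_ne_zero.mpr hα.ne')]
  · rw [show α - 1 = (α - 2) + 1 by ring, Real.rpow_add_one h.ne']

lemma norm_formula {α σ m : ℝ} (hα : 1 < α) (hσ : 0 < σ) (hm : 0 < m)
    (μ : Measure ℝ) [IsProbabilityMeasure μ]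
    (hint : Integrable (fun x : ℝ => x) μ)
    (hft : ∀ ξ : ℝ, ft μ ξ = Complex.exp (-(Complex.I * m * ξ) - ((|σ * ξ| ^ α : ℝ) : ℂ)))
    (ξ : ℝ) :
    ‖ft μ ξ - ft' μ ξ / ft' μ 0‖
      = α * σ / m * (σ * |ξ|) ^ (α - 1) * Real.exp (-(σ * |ξ|) ^ α) := by
  have habs : |σ * ξ| = σ * |ξ| := by rw [abs_mul, abs_of_pos hσ]
  have hft0 : ft' μ 0 = -(Complex.I * m) := by
    have h0 : |σ * (0:ℝ)| = 0 := by simp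
    rw [ft'_eq hα μ hint hft 0, h0, Real.zero_rpow (by positivity : α ≠ 0)]
    norm_num
  set c : ℝ := α * |σ * ξ| ^ (α - 2) * (σ * ξ) * σ with hc
  set E : ℂ := Complex.exp (-(Complex.I * m * ξ) - ((|σ * ξ| ^ α : ℝ) : ℂ)) with hE
  have him : Complex.I * (m : ℂ) ≠ 0 := by
    exact mul_ne_zero Complex.I_ne_zero (Complex.ofReal_ne_zero.mpr hm.ne')
  have hexpr : ft μ ξ - ft' μ ξ / ft' μ 0 = E * (c : ℂ) / (-(Complex.I * m)) := by
    rw [hft ξ, ft'_eq hα μ hint hft ξ, hft0, ← hE, ← hc,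
      eq_div_iff (neg_ne_zero.mpr him), sub_mul, div_mul_cancel₀ _ (neg_ne_zero.mpr him)]
    ring
  rw [hexpr, norm_div, norm_mul, norm_neg, norm_mul, Complex.norm_I, one_mul, Complex.norm_real, Complex.norm_real,
    Real.norm_eq_abs, Real.norm_eq_abs, abs_of_pos hm]
  have hnE : ‖E‖ = Real.exp (-(σ * |ξ|) ^ α) := by
    rw [hE, Complex.norm_exp]
    congr 1
    simp [habs]
  have hnc : |c| = α * σ * (σ * |ξ|) ^ (α - 1) := by
    rw [hc, abs_mul, abs_mul, abs_mul, abs_of_pos (show (0:ℝ) < α by linarith),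
      _root_.abs_of_nonneg (Real.rpow_nonneg (abs_nonneg _) _), abs_of_pos hσ, habs]
    rw [show α * (σ * |ξ|) ^ (α - 2) * (σ * |ξ|) * σ
        = α * σ * ((σ * |ξ|) ^ (α - 2) * (σ * |ξ|)) by ring,
      rpow_sub_two_mul hα (by positivity)]
  rw [hnE, hnc]
  ring

theorem stmt_12 (α σ m : ℝ) (hα : 1 < α) (hα2 : α ≤ 2) (hσ : 0 < σ) (hm : 0 < m)
    (μ : Measure ℝ) [IsProbabilityMeasure μ] (hint : Integrable (fun x : ℝ => x) μ)
    (hft : ∀ ξ : ℝ, ft μ ξ = Complex.exp (-(Complex.I * m * ξ) - ((|σ * ξ| ^ α : ℝ) : ℂ))) :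
    Tindex μ = σ * α / (2 * m) * ((α - 1) / α) ^ ((α - 1) / α)
      * Real.exp (-((α - 1) / α)) := by
  have hα0 : (0:ℝ) < α := by linarith
  set β : ℝ := (α - 1) / α with hβdef
  have hβ : 0 < β := div_pos (by linarith) hα0
  set A : ℝ := α * σ / m with hA
  have hg : ∀ ξ : ℝ, ‖ft μ ξ - ft' μ ξ / ft' μ 0‖
      = A * (((σ * |ξ|) ^ α) ^ β * Real.exp (-(σ * |ξ|) ^ α)) := by
    intro ξ
    rw [norm_formula hα hσ hm μ hint hft ξ, ← Real.rpow_mul (by positivity),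
      show α * β = α - 1 by rw [hβdef]; field_simp]
    ring
  have hbd : ∀ ξ : ℝ, ‖ft μ ξ - ft' μ ξ / ft' μ 0‖ ≤ A * (β ^ β * Real.exp (-β)) := by
    intro ξ
    rw [hg ξ]
    exact mul_le_mul_of_nonneg_left (key_sup hβ (by positivity)) (by positivity)
  have hsup : (⨆ ξ : ℝ, ‖ft μ ξ - ft' μ ξ / ft' μ 0‖) = A * (β ^ β * Real.exp (-β)) := by
    apply le_antisymm (ciSup_le hbd)
    set ξ₀ : ℝ := β ^ (1/α) / σ with hξ₀
    have hξ₀pos : 0 < ξ₀ := div_pos (Real.rpow_pos_of_pos hβ _) hσ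
    have h1 : σ * |ξ₀| = β ^ (1/α) := by
      rw [abs_of_pos hξ₀pos, hξ₀, mul_div_cancel₀ _ hσ.ne']
    have h2 : (σ * |ξ₀|) ^ α = β := by
      rw [h1, ← Real.rpow_mul hβ.le, one_div, inv_mul_cancel₀ hα0.ne', Real.rpow_one]
    have := hg ξ₀
    rw [h2] at this
    rw [← this]
    exact le_ciSup ⟨A * (β ^ β * Real.exp (-β)), by rintro y ⟨ξ, rfl⟩; exact hbd ξ⟩ ξ₀
  rw [Tindex, hsup, hA]
  ring
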